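/- Let k ≥ 2 and let H = (V,E) be a hypergraph in the class ℋ_k with distinguished hyperedge e₀. Then every hyperedge e ∈ E with e ≠ e₀ satisfies d_H(e) = k² − k + 1, where d_H(e) is the number of hyperedges a ≠ e with a ∩ e ≠ ∅. -/

import Mathlib

open Finset

variable {V : Type*}

/-- The degree of a vertex `x`: number of hyperedges containing `x`. -/
def hyperDeg [DecidableEq V] (E : Finset (Finset V)) (x : V) : ℕ :=
  (E.filter fun e => x ∈ e).card

/-- A hypergraph is linear if two distinct hyperedges share at most one vertex. -/
def Linear [DecidableEq V] (E : Finset (Finset V)) : Prop :=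
  ∀ e ∈ E, ∀ f ∈ E, e ≠ f → (e ∩ f).card ≤ 1

/-- The degree of a hyperedge `e`: number of other hyperedges meeting `e`. -/
def edgeDeg [DecidableEq V] (E : Finset (Finset V)) (e : Finset V) : ℕ :=
  (E.filter fun a => a ≠ e ∧ (a ∩ e).Nonempty).card

/-- Degree of a vertex in the 2-section of the hypergraph. -/
def deg2 [Fintype V] [DecidableEq V] (E : Finset (Finset V)) (x : V) : ℕ :=
  (Finset.univ.filter fun y => y ≠ x ∧ ∃ e ∈ E, x ∈ e ∧ y ∈ e).card

/-- Maximum degree of the 2-section. -/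
def maxDeg2 [Fintype V] [DecidableEq V] (E : Finset (Finset V)) : ℕ :=
  Finset.univ.sup (deg2 E)

/-- Minimum degree of the 2-section. -/
noncomputable def minDeg2 [Fintype V] [DecidableEq V] (E : Finset (Finset V)) : ℕ :=
  sInf (Set.range (deg2 E))

/-- Maximum vertex degree of the hypergraph. -/
def maxDeg [Fintype V] [DecidableEq V] (E : Finset (Finset V)) : ℕ :=
  Finset.univ.sup (hyperDeg E)

/-- A proper hyperedge coloring with `q` colors. -/
def ColorableWith [DecidableEq V] (E : Finset (Finset V)) (q : ℕ) : Prop :=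
  ∃ c : Finset V → Fin q, ∀ e ∈ E, ∀ f ∈ E, e ≠ f → (e ∩ f).Nonempty → c e ≠ c f

/-- The chromatic index: least number of colors in a proper hyperedge coloring. -/
noncomputable def chromIndex [DecidableEq V] (E : Finset (Finset V)) : ℕ :=
  sInf {q | ColorableWith E q}

lemma sum_hyperDeg [Fintype V] [DecidableEq V] (E : Finset (Finset V)) :
    ∑ x : V, hyperDeg E x = ∑ e ∈ E, e.card := by
  simp_rw [hyperDeg, Finset.card_filter]
  rw [Finset.sum_comm]
  refine Finset.sum_congr rfl fun e _ => ?_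
  rw [Finset.sum_ite_mem, Finset.univ_inter, Finset.card_eq_sum_ones]

lemma fiber_card [DecidableEq V] {E : Finset (Finset V)} {e : Finset V} (he : e ∈ E)
    {x : V} (hx : x ∈ e) :
    (E.filter fun a => a ≠ e ∧ x ∈ a).card = hyperDeg E x - 1 := by
  have h : E.filter (fun a => a ≠ e ∧ x ∈ a) = (E.filter fun a => x ∈ a).erase e := by
    ext a; simp only [mem_filter, mem_erase]; tauto
  rw [h, card_erase_of_mem (by simp [he, hx]), hyperDeg]

lemma edgeDeg_formula [DecidableEq V] {E : Finset (Finset V)} (hlin : Linear E)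
    {e : Finset V} (he : e ∈ E) :
    edgeDeg E e = ∑ x ∈ e, (hyperDeg E x - 1) := by
  have hset : E.filter (fun a => a ≠ e ∧ (a ∩ e).Nonempty)
      = e.biUnion (fun x => E.filter fun a => a ≠ e ∧ x ∈ a) := by
    ext a
    simp only [mem_filter, mem_biUnion]
    constructor
    · rintro ⟨haE, hne, y, hy⟩
      rw [mem_inter] at hy
      exact ⟨y, hy.2, haE, hne, hy.1⟩
    · rintro ⟨x, hx, haE, hne, hxa⟩
      exact ⟨haE, hne, x, mem_inter.2 ⟨hxa, hx⟩⟩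
  rw [edgeDeg, hset, card_biUnion]
  · exact Finset.sum_congr rfl fun x hx => fiber_card he hx
  · intro x hx y hy hxy
    rw [Function.onFun, Finset.disjoint_left]
    rintro a ha hb
    simp only [mem_filter] at ha hb
    have hsub : ({x, y} : Finset V) ⊆ a ∩ e := by
      intro z hz
      rw [mem_insert, mem_singleton] at hz
      rcases hz with rfl | rfl <;> simp [mem_inter, ha.2.2, hb.2.2, Finset.mem_coe.1 hx, Finset.mem_coe.1 hy]
    have h2 : 2 ≤ (a ∩ e).card := by
      have := card_le_card hsub
      rwa [card_pair hxy] at this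
    have := hlin a ha.1 e he ha.2.1
    omega

theorem stmt13 {V : Type*} [Fintype V] [DecidableEq V] (k : ℕ) (hk : 2 ≤ k)
    (E : Finset (Finset V)) (e₀ : Finset V)
    (hlin : Linear E) (huni : ∀ e ∈ E, e.card = k)
    (hV : Fintype.card V = k ^ 2) (hEcard : E.card = k ^ 2 + 1)
    (he₀ : e₀ ∈ E) (hdeg₀ : ∀ x ∈ e₀, hyperDeg E x = k + 1)
    (hdeg : ∀ x : V, x ∉ e₀ → k ≤ hyperDeg E x) :
    ∀ e ∈ E, e ≠ e₀ → edgeDeg E e = k ^ 2 - k + 1 := by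
  intro e heE hne
  have he0card : e₀.card = k := huni e₀ he₀
  -- total degree sum
  have htot : ∑ x : V, hyperDeg E x = (k ^ 2 + 1) * k := by
    rw [sum_hyperDeg, Finset.sum_congr rfl (fun a ha => huni a ha), Finset.sum_const,
      hEcard, smul_eq_mul]
  have hsum0 : ∑ x ∈ e₀, hyperDeg E x = k * (k + 1) := by
    rw [Finset.sum_congr rfl hdeg₀, Finset.sum_const, he0card, smul_eq_mul]
  have hsplit : ∑ x ∈ univ \ e₀, hyperDeg E x + ∑ x ∈ e₀, hyperDeg E x
      = ∑ x : V, hyperDeg E x := Finset.sum_sdiff (subset_univ e₀)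
  have hccompl : (univ \ e₀).card = k ^ 2 - k := by
    rw [card_sdiff_of_subset (subset_univ e₀), card_univ, hV, he0card]
  -- off e₀, degree is exactly k
  have hcsum : ∑ _x ∈ univ \ e₀, (k : ℕ) = ∑ x ∈ univ \ e₀, hyperDeg E x := by
    rw [Finset.sum_const, hccompl, smul_eq_mul]
    have h : (∑ x ∈ univ \ e₀, hyperDeg E x) + (k * k + k) = k * k * k + k := by
      calc (∑ x ∈ univ \ e₀, hyperDeg E x) + (k * k + k)
          = (∑ x ∈ univ \ e₀, hyperDeg E x) + k * (k + 1) := by ring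
        _ = (k ^ 2 + 1) * k := by rw [← hsum0, hsplit, htot]
        _ = k * k * k + k := by ring
    have hs : (k ^ 2 - k) * k = k * k * k - k * k := by
      rw [sq, Nat.sub_mul]
    rw [hs]
    have hab : k * k ≤ k * k * k := Nat.le_mul_of_pos_right _ (by omega)
    obtain ⟨a, ha⟩ : ∃ a, k * k = a := ⟨_, rfl⟩
    rw [ha] at h hab ⊢
    obtain ⟨b, hb⟩ : ∃ b, a * k = b := ⟨_, rfl⟩
    rw [hb] at h hab ⊢
    omega
  have hdegc := (Finset.sum_eq_sum_iff_of_le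
    (fun i hi => hdeg i ((mem_sdiff.1 hi).2))).1 hcsum
  have hdegk : ∀ x : V, x ∉ e₀ → hyperDeg E x = k := fun x hx =>
    (hdegc x (mem_sdiff.2 ⟨mem_univ x, hx⟩)).symm
  -- edgeDeg of e₀
  have h0 : edgeDeg E e₀ = k * k := by
    rw [edgeDeg_formula hlin he₀,
      Finset.sum_congr rfl (fun x hx => by rw [hdeg₀ x hx, Nat.add_sub_cancel]),
      Finset.sum_const, he0card, smul_eq_mul]
  -- every other edge meets e₀
  have hmeet : (e ∩ e₀).Nonempty := by
    set S := E.filter (fun a => a ≠ e₀ ∧ (a ∩ e₀).Nonempty) with hS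
    have hnotin : e₀ ∉ S := by simp [hS]
    have hsub : insert e₀ S ⊆ E := by
      intro a ha
      rcases mem_insert.1 ha with rfl | ha
      · exact he₀
      · exact (mem_filter.1 ha).1
    have hcard : (insert e₀ S).card = E.card := by
      rw [card_insert_of_notMem hnotin]
      show edgeDeg E e₀ + 1 = E.card
      rw [h0, hEcard, sq]
    have heq : insert e₀ S = E :=
      Finset.eq_of_subset_of_card_le hsub (le_of_eq hcard.symm)
    have heS : e ∈ insert e₀ S := by rw [heq]; exact heE
    rcases mem_insert.1 heS with rfl | h
    · exact absurd rfl hne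
    · exact (mem_filter.1 h).2.2
  have hc1 : (e ∩ e₀).card = 1 :=
    le_antisymm (hlin e heE e₀ he₀ hne) (card_pos.2 hmeet)
  -- final computation
  rw [edgeDeg_formula hlin heE]
  have hsd : e \ (e ∩ e₀) = e \ e₀ := sdiff_inter_self_left e e₀
  have hsplit2 : ∑ x ∈ e \ (e ∩ e₀), (hyperDeg E x - 1)
      + ∑ x ∈ e ∩ e₀, (hyperDeg E x - 1) = ∑ x ∈ e, (hyperDeg E x - 1) :=
    Finset.sum_sdiff inter_subset_left
  have hcardsd : (e \ e₀).card = k - 1 := by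
    have := Finset.card_inter_add_card_sdiff e e₀
    rw [hc1, huni e heE] at this
    omega
  have hA : ∑ x ∈ e ∩ e₀, (hyperDeg E x - 1) = k := by
    rw [Finset.sum_congr rfl (fun x hx => by
        rw [hdeg₀ x (mem_inter.1 hx).2, Nat.add_sub_cancel]),
      Finset.sum_const, hc1, one_smul]
  have hB : ∑ x ∈ e \ (e ∩ e₀), (hyperDeg E x - 1) = (k - 1) * (k - 1) := by
    rw [hsd, Finset.sum_congr rfl (fun x hx => by
        rw [hdegk x (mem_sdiff.1 hx).2]),
      Finset.sum_const, hcardsd, smul_eq_mul]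
  rw [← hsplit2, hA, hB]
  obtain ⟨m, rfl⟩ : ∃ m, k = m + 1 := ⟨k - 1, by omega⟩
  have hexp : (m + 1) ^ 2 = m * m + 2 * m + 1 := by ring
  obtain ⟨p, hp⟩ : ∃ p, m * m = p := ⟨_, rfl⟩
  rw [hexp]
  simp only [Nat.add_sub_cancel]
  rw [hp]
  omega
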